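/- Let φ: R → S be as in the setup, and assume: (a) the quotient φ(π)S/φ(π)²S is a finite set; (b) the induced surjection φ₁: R/πR → S/φ(π)S is an isomorphism; and (c) R/πR is isomorphic as an O-algebra to O/ϖʳ for some positive integer r. Then φ: R → S is an isomorphism of O-algebras. -/

import Mathlib

open IsLocalRing

section BKaux

variable {A : Type*} [CommRing A]

private lemma BK.regular_pow {a : A} (ha : ∀ x : A, a * x = 0 → x = 0) :
    ∀ (n : ℕ) (x : A), a ^ n * x = 0 → x = 0 := by
  intro n
  induction n with
  | zero => intro x hx; simpa using hx
  | succ n ih =>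
    intro x hx
    refine ih x (ha _ ?_)
    rw [show a * (a ^ n * x) = a ^ (n + 1) * x by ring, hx]

private lemma BK.finite_module {M : Type*} [AddCommGroup M] (N : AddSubgroup M)
    (h1 : Finite N) (h2 : Finite (M ⧸ N)) : Finite M :=
  @Finite.of_addSubgroup_quotient _ _ N h1 h2

private lemma BK.card_quot_step (a : A) (n : ℕ)
    (h1 : Finite (A ⧸ Ideal.span {a})) (hn : Finite (A ⧸ Ideal.span {a ^ n})) :
    Finite (A ⧸ Ideal.span {a ^ (n + 1)}) ∧
      Nat.card (A ⧸ Ideal.span {a ^ (n + 1)}) ≤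
        Nat.card (A ⧸ Ideal.span {a}) * Nat.card (A ⧸ Ideal.span {a ^ n}) ∧
      ((∀ x : A, a * x = 0 → x = 0) →
        Nat.card (A ⧸ Ideal.span {a ^ (n + 1)}) =
          Nat.card (A ⧸ Ideal.span {a}) * Nat.card (A ⧸ Ideal.span {a ^ n})) := by
  set I : Ideal A := Ideal.span {a ^ (n + 1)} with hI
  set J : Ideal A := Ideal.span {a ^ n} with hJ
  have hIJ : I ≤ J := by
    rw [hI, Ideal.span_le, Set.singleton_subset_iff]
    exact Ideal.mem_span_singleton.mpr ⟨a, pow_succ a n⟩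
  set ψ0 : A →ₗ[A] A ⧸ I := I.mkQ.comp (LinearMap.toSpanSingleton A A (a ^ n)) with hψ0
  have hψ0app : ∀ x : A, ψ0 x = Submodule.Quotient.mk (x * a ^ n) := fun x => rfl
  have hrange : LinearMap.range ψ0 = Submodule.map I.mkQ J := by
    rw [hψ0, LinearMap.range_comp, ← LinearMap.span_singleton_eq_range, hJ]
  have hker0 : (Ideal.span {a} : Ideal A) ≤ LinearMap.ker ψ0 := by
    rw [Ideal.span_le, Set.singleton_subset_iff]
    show ψ0 a = 0
    rw [hψ0app, Submodule.Quotient.mk_eq_zero]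
    exact Ideal.mem_span_singleton.mpr ⟨1, by ring⟩
  set ψ : (A ⧸ (Ideal.span {a} : Ideal A)) →ₗ[A] A ⧸ I :=
    Submodule.liftQ _ ψ0 hker0 with hψ
  have hψrange : LinearMap.range ψ = Submodule.map I.mkQ J := by
    rw [hψ, Submodule.range_liftQ, hrange]
  have hKfin : Finite (Submodule.map I.mkQ J) := by
    rw [← hψrange]
    exact Finite.of_surjective ψ.rangeRestrict ψ.surjective_rangeRestrict
  have hKle : Nat.card (Submodule.map I.mkQ J) ≤ Nat.card (A ⧸ (Ideal.span {a} : Ideal A)) := by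
    rw [← hψrange]
    exact Nat.card_le_card_of_surjective ψ.rangeRestrict ψ.surjective_rangeRestrict
  have hcardmul : Nat.card (Submodule.map I.mkQ J) * Nat.card (A ⧸ J) = Nat.card (A ⧸ I) :=
    Submodule.card_quotient_mul_card_quotient J I hIJ
  have hQfin : Finite ((A ⧸ I) ⧸ ((Submodule.map I.mkQ J) : Submodule A (A ⧸ I))) :=
    Finite.of_equiv _ (Submodule.quotientQuotientEquivQuotient I J hIJ).toEquiv.symm
  have hfinI : Finite (A ⧸ I) :=
    BK.finite_module (Submodule.map I.mkQ J).toAddSubgroup hKfin hQfin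
  refine ⟨hfinI, ?_, ?_⟩
  · rw [← hcardmul]
    exact Nat.mul_le_mul_right _ hKle
  · intro hreg
    have hKeq : Nat.card (Submodule.map I.mkQ J) = Nat.card (A ⧸ (Ideal.span {a} : Ideal A)) := by
      have hker_le : LinearMap.ker ψ0 ≤ (Ideal.span {a} : Ideal A) := by
        intro x hx
        have hx0 : ψ0 x = 0 := hx
        rw [hψ0app, Submodule.Quotient.mk_eq_zero, hI] at hx0
        obtain ⟨c, hc⟩ := Ideal.mem_span_singleton.mp hx0
        have h2 : a ^ n * (x - c * a) = 0 := by
          have : x * a ^ n = a ^ n * (c * a) := by rw [hc]; ring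
          rw [mul_sub, ← this]; ring
        have h3 := BK.regular_pow hreg n _ h2
        have hx' : x = c * a := sub_eq_zero.mp h3
        exact hx' ▸ Ideal.mem_span_singleton.mpr ⟨c, by ring⟩
      have hinj : Function.Injective ψ := by
        rw [← LinearMap.ker_eq_bot]
        exact Submodule.ker_liftQ_eq_bot _ _ _ hker_le
      have hbij : Function.Bijective ψ.rangeRestrict :=
        ⟨fun x y hxy => hinj (Subtype.ext_iff.mp hxy), ψ.surjective_rangeRestrict⟩
      calc Nat.card (Submodule.map I.mkQ J) = Nat.card (LinearMap.range ψ) := by rw [hψrange]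
        _ = Nat.card (A ⧸ (Ideal.span {a} : Ideal A)) :=
            (Nat.card_congr (Equiv.ofBijective _ hbij)).symm
    rw [← hcardmul, hKeq]

private lemma BK.card_quot_pow_le (a : A) (h1 : Finite (A ⧸ Ideal.span {a})) (n : ℕ) :
    Finite (A ⧸ Ideal.span {a ^ n}) ∧
      Nat.card (A ⧸ Ideal.span {a ^ n}) ≤ Nat.card (A ⧸ Ideal.span {a}) ^ n := by
  induction n with
  | zero =>
    have hs : Subsingleton (A ⧸ Ideal.span {a ^ 0}) := by
      rw [Submodule.Quotient.subsingleton_iff, pow_zero, Ideal.span_singleton_one]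
    have hne : Nonempty (A ⧸ Ideal.span {a ^ 0}) := ⟨Submodule.Quotient.mk 0⟩
    have h1' : Nat.card (A ⧸ Ideal.span {a ^ 0}) = 1 :=
      Nat.card_eq_one_iff_unique.mpr ⟨hs, hne⟩
    exact ⟨Finite.of_subsingleton, by rw [h1', pow_zero]⟩
  | succ n ih =>
    obtain ⟨hfin, hle⟩ := ih
    obtain ⟨hfin', hle', _⟩ := BK.card_quot_step a n h1 hfin
    refine ⟨hfin', hle'.trans ?_⟩
    rw [pow_succ']
    exact Nat.mul_le_mul_left _ hle

private lemma BK.card_quot_pow_eq (a : A) (h1 : Finite (A ⧸ Ideal.span {a}))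
    (hreg : ∀ x : A, a * x = 0 → x = 0) (n : ℕ) :
    Nat.card (A ⧸ Ideal.span {a ^ n}) = Nat.card (A ⧸ Ideal.span {a}) ^ n := by
  induction n with
  | zero =>
    have hs : Subsingleton (A ⧸ Ideal.span {a ^ 0}) := by
      rw [Submodule.Quotient.subsingleton_iff, pow_zero, Ideal.span_singleton_one]
    have hne : Nonempty (A ⧸ Ideal.span {a ^ 0}) := ⟨Submodule.Quotient.mk 0⟩
    have h1' : Nat.card (A ⧸ Ideal.span {a ^ 0}) = 1 :=
      Nat.card_eq_one_iff_unique.mpr ⟨hs, hne⟩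
    rw [h1', pow_zero]
  | succ n ih =>
    obtain ⟨hfin, _⟩ := BK.card_quot_pow_le a h1 n
    obtain ⟨_, _, heq⟩ := BK.card_quot_step a n h1 hfin
    rw [heq hreg, ih, pow_succ, mul_comm]

end BKaux

/-- Theorem `cri1`, first case, of Berger–Klosin:
`O` is a complete discrete valuation ring with uniformizer `ϖ` and finite residue field;
`R` and `S` are complete local Noetherian `O`-algebras with residue field `F` (that of `O`),
`S` is finite free as an `O`-module, `φ : R → S` is a surjective `O`-algebra map and `π ∈ R`.
If `φ(π)S/φ(π)²S` is finite, the induced map `φ₁ : R/πR → S/φ(π)S` is an isomorphism and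
`R/πR ≅ O/ϖʳ` for some positive integer `r`, then `φ` is an isomorphism. -/
theorem deformation_criterion_torsion_case
    {O : Type*} [CommRing O] [IsDomain O] [IsDiscreteValuationRing O]
    [IsAdicComplete (maximalIdeal O) O] [Finite (ResidueField O)]
    (ϖ : O) (hϖ : Irreducible ϖ)
    {R S : Type*} [CommRing R] [CommRing S] [IsLocalRing R] [IsLocalRing S]
    [IsNoetherianRing R] [IsNoetherianRing S]
    [Algebra O R] [Algebra O S]
    [IsAdicComplete (maximalIdeal R) R] [IsAdicComplete (maximalIdeal S) S]
    -- the residue field of `R` is `F`, the residue field of `O`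
    (hRsurj : Function.Surjective ((residue R).comp (algebraMap O R)))
    (hRker : RingHom.ker ((residue R).comp (algebraMap O R)) = maximalIdeal O)
    -- the residue field of `S` is `F`, the residue field of `O`
    (hSsurj : Function.Surjective ((residue S).comp (algebraMap O S)))
    (hSker : RingHom.ker ((residue S).comp (algebraMap O S)) = maximalIdeal O)
    -- `S` is a finitely generated free `O`-module
    [Module.Finite O S] [Module.Free O S]
    (φ : R →ₐ[O] S) (hφ : Function.Surjective φ) (π : R)
    -- (a) `φ(π)S/φ(π)²S` is finite
    (hfin : Finite (Submodule.map (Ideal.span {φ π ^ 2} : Ideal S).mkQ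
      (Ideal.span {φ π} : Ideal S)))
    -- (b) the induced surjection `φ₁ : R/πR → S/φ(π)S` is an isomorphism
    (hbij : Function.Bijective
      (Ideal.quotientMap (Ideal.span {φ π}) (φ : R →+* S)
        (show Ideal.span {π} ≤ (Ideal.span {φ π}).comap (φ : R →+* S) by
          rw [Ideal.span_le, Set.singleton_subset_iff]
          exact Ideal.subset_span rfl)))
    -- (c) `R/πR ≅ O/ϖʳ` as `O`-algebras, for some positive integer `r`
    (r : ℕ) (hr : 0 < r)
    (hRmod : Nonempty ((R ⧸ (Ideal.span {π} : Ideal R)) ≃ₐ[O] (O ⧸ (Ideal.span {ϖ ^ r} : Ideal O)))) :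
    Function.Bijective φ := by
  obtain ⟨e⟩ := hRmod
  -- `O ⧸ (ϖ)` is finite, hence `O ⧸ (ϖ^r)`, hence `R ⧸ (π)`, hence `S ⧸ (φ π)`
  have hmax : maximalIdeal O = Ideal.span {ϖ} :=
    (IsDiscreteValuationRing.irreducible_iff_uniformizer ϖ).mp hϖ
  have hOfin : Finite (O ⧸ (Ideal.span {ϖ} : Ideal O)) :=
    Finite.of_equiv (ResidueField O) (Ideal.quotEquivOfEq hmax).toEquiv
  have hOrfin : Finite (O ⧸ (Ideal.span {ϖ ^ r} : Ideal O)) :=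
    (BK.card_quot_pow_le ϖ hOfin r).1
  have hRfin : Finite (R ⧸ (Ideal.span {π} : Ideal R)) :=
    Finite.of_equiv _ e.toEquiv.symm
  set a : S := φ π with ha
  have hSfin : Finite (S ⧸ (Ideal.span {a} : Ideal S)) :=
    Finite.of_surjective _ hbij.surjective
  -- `O` is infinite
  have hϖ0 : ϖ ≠ 0 := hϖ.ne_zero
  have hOinf : Infinite O :=
    Infinite.of_injective (fun n : ℕ => ϖ ^ n)
      (pow_injective_of_not_isUnit hϖ.not_isUnit hϖ0)
  -- `a = φ π` is a regular element of `S`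
  have hreg : ∀ x : S, a * x = 0 → x = 0 := by
    obtain ⟨x, y, hxy, hfxy⟩ := Finite.exists_ne_map_eq_of_infinite
      (fun t : O => Ideal.Quotient.mk (Ideal.span {a}) (algebraMap O S t))
    have hsub : algebraMap O S (x - y) ∈ (Ideal.span {a} : Ideal S) := by
      rw [map_sub]
      exact Ideal.Quotient.eq.mp hfxy
    have hxy0 : x - y ≠ 0 := sub_ne_zero.mpr hxy
    obtain ⟨m, u, hmu⟩ := IsDiscreteValuationRing.eq_unit_mul_pow_irreducible hxy0 hϖ
    have hϖm : algebraMap O S (ϖ ^ m) ∈ (Ideal.span {a} : Ideal S) := by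
      have h1 : (ϖ ^ m : O) = (↑u⁻¹ : O) * (x - y) := by
        rw [hmu, ← mul_assoc, ← Units.val_mul, inv_mul_cancel, Units.val_one, one_mul]
      rw [h1, map_mul]
      exact Ideal.mul_mem_left _ _ hsub
    obtain ⟨s, hs⟩ := Ideal.mem_span_singleton'.mp hϖm
    intro z hz
    have hz0 : (ϖ ^ m) • z = 0 := by
      rw [Algebra.smul_def, ← hs, mul_assoc, hz, mul_zero]
    have hϖm0 : (ϖ ^ m : O) ≠ 0 := pow_ne_zero _ hϖ0
    exact (smul_eq_zero.mp hz0).resolve_left hϖm0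
  -- cardinality comparison
  set c : ℕ := Nat.card (R ⧸ (Ideal.span {π} : Ideal R)) with hc
  have hScard : Nat.card (S ⧸ (Ideal.span {a} : Ideal S)) = c :=
    (Nat.card_congr (Equiv.ofBijective _ hbij)).symm
  have hle : ∀ n : ℕ, Ideal.span {π ^ n} ≤ (Ideal.span {a ^ n}).comap (φ : R →+* S) := by
    intro n
    rw [Ideal.span_le, Set.singleton_subset_iff]
    show φ (π ^ n) ∈ Ideal.span {a ^ n}
    rw [map_pow]
    exact Ideal.subset_span rfl
  have key : ∀ (n : ℕ) (x : R), φ x = 0 → x ∈ Ideal.span {π ^ n} := by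
    intro n x hx
    set Φ := Ideal.quotientMap (Ideal.span {a ^ n}) (φ : R →+* S) (hle n) with hΦ
    have hΦsurj : Function.Surjective Φ := by
      intro y
      obtain ⟨s, rfl⟩ := Ideal.Quotient.mk_surjective y
      obtain ⟨t, rfl⟩ := hφ s
      exact ⟨Ideal.Quotient.mk _ t, Ideal.quotientMap_mk⟩
    obtain ⟨hRfinn, hRle⟩ := BK.card_quot_pow_le π hRfin n
    have hSn : Nat.card (S ⧸ (Ideal.span {a ^ n} : Ideal S)) =
        Nat.card (S ⧸ (Ideal.span {a} : Ideal S)) ^ n := BK.card_quot_pow_eq a hSfin hreg n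
    have hSfinn : Finite (S ⧸ (Ideal.span {a ^ n} : Ideal S)) :=
      (BK.card_quot_pow_le a hSfin n).1
    have hcards : Nat.card (R ⧸ (Ideal.span {π ^ n} : Ideal R)) =
        Nat.card (S ⧸ (Ideal.span {a ^ n} : Ideal S)) := by
      refine le_antisymm ?_ (Nat.card_le_card_of_surjective _ hΦsurj)
      calc Nat.card (R ⧸ (Ideal.span {π ^ n} : Ideal R)) ≤ c ^ n := hRle
        _ = Nat.card (S ⧸ (Ideal.span {a ^ n} : Ideal S)) := by rw [hSn, hScard]
    have hΦbij : Function.Bijective Φ :=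
      (Nat.bijective_iff_surjective_and_card Φ).mpr ⟨hΦsurj, hcards⟩
    have h0 : Φ (Ideal.Quotient.mk _ x) = 0 := by
      rw [Ideal.quotientMap_mk]
      show Ideal.Quotient.mk _ (φ x) = 0
      rw [hx, map_zero]
    have h1 : (Ideal.Quotient.mk (Ideal.span {π ^ n}) x) = 0 := by
      apply hΦbij.injective
      rw [h0, map_zero]
    exact Ideal.Quotient.eq_zero_iff_mem.mp h1
  -- π is in the maximal ideal of R
  have hπmem : π ∈ maximalIdeal R := by
    rw [mem_maximalIdeal, mem_nonunits_iff]
    intro hunit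
    have htop : (Ideal.span {π} : Ideal R) = ⊤ := Ideal.span_singleton_eq_top.mpr hunit
    have hsub : Subsingleton (R ⧸ (Ideal.span {π} : Ideal R)) :=
      Submodule.Quotient.subsingleton_iff.mpr htop
    have hsub2 : Subsingleton (O ⧸ (Ideal.span {ϖ ^ r} : Ideal O)) :=
      e.toEquiv.symm.subsingleton
    have htop2 : (Ideal.span {ϖ ^ r} : Ideal O) = ⊤ :=
      Submodule.Quotient.subsingleton_iff.mp hsub2
    have : IsUnit (ϖ ^ r) := Ideal.span_singleton_eq_top.mp htop2
    exact hϖ.not_isUnit ((isUnit_pow_iff hr.ne').mp this)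
  -- conclude injectivity via Krull-style intersection (Hausdorffness)
  have hinj : Function.Injective φ := by
    rw [injective_iff_map_eq_zero]
    intro x hx0
    have hH : IsHausdorff (maximalIdeal R) R := inferInstance
    refine hH.haus' x fun n => ?_
    rw [SModEq.zero]
    have h1 : x ∈ Ideal.span {π ^ n} := key n x hx0
    have h2 : (Ideal.span {π ^ n} : Ideal R) ≤ (maximalIdeal R) ^ n := by
      rw [← Ideal.span_singleton_pow]
      refine Ideal.pow_right_mono ?_ n
      rwa [Ideal.span_le, Set.singleton_subset_iff]
    have h3 : x ∈ (maximalIdeal R) ^ n := h2 h1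
    simpa using h3
  exact ⟨hinj, hφ⟩
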